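/- Let R be a unital ring which is purely infinite and simple. Then R is not a division ring, and for every non-zero element x in R there exist s, t in R with sxt = 1. Conversely, if R is a unital ring which is not a division ring and for every non-zero x there exist s, t with sxt = 1, then R is purely infinite simple. -/

import Mathlib

private lemma pis_key {R : Type*} [Ring R] (p q X Y : R)
    (hpp : p*p = p) (hqq : q*q = q) (hqp : q*p = q) (hpq : p*q = q)
    (hX : X = q*X*p) (hY : Y = p*Y*q) (hXY : X*Y = q) (hYX : Y*X = p) :
    ∀ z ∈ AddSubgroup.closure {w : R | ∃ c d : R, w = c * ((p - q) * d)},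
      ∃ a b : R, ∃ m : ℕ, a * b = z ∧ (q - X^m * (q * Y^m)) * b = b ∧
        a * (q - X^m * (q * Y^m)) = a ∧ p * b = b := by
  -- basic absorption facts
  have hXp : X * p = X := by nth_rewrite 1 [hX]; rw [mul_assoc (q*X), hpp, ← hX]
  have hqX : q * X = X := by nth_rewrite 1 [hX]; rw [← mul_assoc, ← mul_assoc, hqq, ← hX]
  have hpX : p * X = X := by rw [← hqX, ← mul_assoc, hpq]
  have hYq : Y * q = Y := by nth_rewrite 1 [hY]; rw [mul_assoc (p*Y), hqq, ← hY]
  have hpY : p * Y = Y := by nth_rewrite 1 [hY]; rw [← mul_assoc, ← mul_assoc, hpp, ← hY]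
  have hYp : Y * p = Y := by rw [← hYq, mul_assoc, hqp]
  -- master absorption lemmas
  have A1 : ∀ (m : ℕ) (u : R), p * u = u → p * (X^m * u) = X^m * u := by
    intro m u hu
    cases m with
    | zero => simpa using hu
    | succ n => rw [pow_succ', mul_assoc X, ← mul_assoc p X, hpX]
  have B2 : ∀ (m : ℕ) (u : R), q * u = u → q * (X^m * u) = X^m * u := by
    intro m u hu
    cases m with
    | zero => simpa using hu
    | succ n => rw [pow_succ', mul_assoc X, ← mul_assoc q X, hqX]
  have A4 : ∀ (m : ℕ) (t : R), t * p = t → t * Y^m * p = t * Y^m := by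
    intro m t ht
    cases m with
    | zero => simpa using ht
    | succ n => rw [pow_succ, ← mul_assoc t (Y^n) Y, mul_assoc (t*Y^n) Y p, hYp]
  have B1 : ∀ (m : ℕ) (t : R), t * q = t → t * Y^m * q = t * Y^m := by
    intro m t ht
    cases m with
    | zero => simpa using ht
    | succ n => rw [pow_succ, ← mul_assoc t (Y^n) Y, mul_assoc (t*Y^n) Y q, hYq]
  have A3 : ∀ (m : ℕ) (t u : R), t * p = t → t * Y^m * (X^m * u) = t * u := by
    intro m
    induction m with
    | zero => intro t u ht; simp [ht]
    | succ n ih =>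
      intro t u ht
      rw [pow_succ, pow_succ', ← mul_assoc t (Y^n) Y, mul_assoc X (X^n) u,
        mul_assoc (t*Y^n) Y (X*(X^n*u)), ← mul_assoc Y X (X^n*u), hYX,
        ← mul_assoc (t*Y^n) p (X^n*u), A4 n t ht]
      exact ih t u ht
  -- notation-level products (G k = X^k * (q * Y^k))
  have qq' : ∀ k : ℕ, q * (q * Y^k) = q * Y^k := by
    intro k; rw [← mul_assoc, hqq]
  have pi1 : ∀ k : ℕ, q * (X^k * (q * Y^k)) = X^k * (q * Y^k) := by
    intro k; exact B2 k _ (qq' k)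
  have pi2 : ∀ k : ℕ, (X^k * (q * Y^k)) * q = X^k * (q * Y^k) := by
    intro k; rw [mul_assoc (X^k), B1 k q hqq]
  have piY : ∀ (a b : ℕ), (X^b * (q * Y^b)) * Y^a = X^b * (q * Y^(b+a)) := by
    intro a b; rw [mul_assoc (X^b), mul_assoc q (Y^b) (Y^a), ← pow_add]
  have hqYp : ∀ b : ℕ, q * Y^b * p = q * Y^b := fun b => A4 b q hqp
  have pi4 : ∀ a : ℕ, (X^a * (q * Y^a)) * (X^a * q) = X^a * q := by
    intro a; rw [mul_assoc (X^a), A3 a q q hqp, hqq]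
  have pi5 : ∀ a b : ℕ,
      (X^a * (q * Y^a)) * (X^a * (X^b * (q * Y^b))) = X^a * (X^b * (q * Y^b)) := by
    intro a b; rw [mul_assoc (X^a) (q*Y^a), A3 a q _ hqp, pi1 b]
  have pi6 : ∀ a b : ℕ,
      (X^(a+b) * (q * Y^(a+b))) * (X^a * q) = X^(a+b) * (q * Y^b) := by
    intro a b
    rw [mul_assoc (X^(a+b)) (q*Y^(a+b)), show (Y:R)^(a+b) = Y^b * Y^a by rw [add_comm, pow_add],
      ← mul_assoc q (Y^b) (Y^a), A3 a (q*Y^b) q (hqYp b), B1 b q hqq]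
  have pi7 : ∀ a b : ℕ,
      (X^(a+b) * (q * Y^(a+b))) * (X^a * (X^b * (q * Y^b))) = X^(a+b) * (q * Y^b) := by
    intro a b
    rw [mul_assoc (X^(a+b)) (q*Y^(a+b)), show (Y:R)^(a+b) = Y^b * Y^a by rw [add_comm, pow_add],
      ← mul_assoc q (Y^b) (Y^a), A3 a (q*Y^b) _ (hqYp b), A3 b q _ hqp, qq' b]
  have pi9 : ∀ a : ℕ, (q * Y^a) * (X^a * (q * Y^a)) = q * Y^a := by
    intro a; rw [A3 a q _ hqp, qq' a]
  have pi10 : ∀ a b : ℕ, ((X^b * (q * Y^b)) * Y^a) * q = (X^b * (q * Y^b)) * Y^a := by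
    intro a b; rw [piY a b, mul_assoc (X^b), B1 (b+a) q hqq]
  have pi11 : ∀ a b : ℕ,
      ((X^b * (q * Y^b)) * Y^a) * (X^a * (q * Y^a)) = (X^b * (q * Y^b)) * Y^a := by
    intro a b
    rw [piY a b, mul_assoc (X^b), pow_add, ← mul_assoc q (Y^b) (Y^a),
      A3 a (q*Y^b) _ (hqYp b), ← mul_assoc (q*Y^b) q (Y^a), B1 b q hqq]
  have pi12 : ∀ a b : ℕ,
      (q * Y^a) * (X^(a+b) * (q * Y^(a+b))) = X^b * (q * Y^(a+b)) := by
    intro a b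
    rw [pow_add X a b, mul_assoc (X^a) (X^b), A3 a q _ hqp, B2 b _ (qq' (a+b))]
  have pi13 : ∀ a b : ℕ,
      ((X^b * (q * Y^b)) * Y^a) * (X^(a+b) * (q * Y^(a+b))) = X^b * (q * Y^(a+b)) := by
    intro a b
    rw [piY a b, pow_add X a b, mul_assoc (X^a) (X^b) (q * Y^(a+b)),
      mul_assoc (X^b) (q * Y^(b+a)), show (Y:R)^(b+a) = Y^b * Y^a by rw [pow_add],
      ← mul_assoc q (Y^b) (Y^a), A3 a (q*Y^b) _ (hqYp b), A3 b q _ hqp, qq' (a+b)]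
  have pi14 : ∀ a b : ℕ,
      (X^(a+b) * (q * Y^(a+b))) * (X^a * (q * Y^a)) = X^(a+b) * (q * Y^(a+b)) := by
    intro a b
    rw [mul_assoc (X^(a+b)) (q*Y^(a+b)), show (Y:R)^(a+b) = Y^b * Y^a by rw [add_comm, pow_add],
      ← mul_assoc q (Y^b) (Y^a), A3 a (q*Y^b) _ (hqYp b), ← mul_assoc (q*Y^b) q (Y^a),
      B1 b q hqq]
  have pi15 : ∀ a b : ℕ,
      (X^a * (q * Y^a)) * (X^(a+b) * (q * Y^(a+b))) = X^(a+b) * (q * Y^(a+b)) := by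
    intro a b
    rw [pow_add X a b, mul_assoc (X^a) (X^b) (q*Y^(a+b)), mul_assoc (X^a) (q*Y^a),
      A3 a q _ hqp, B2 b _ (qq' (a+b))]
  -- F-level lemmas, F k = q - X^k * (q * Y^k)
  have phi1 : ∀ a b : ℕ,
      (q - X^(a+b) * (q * Y^(a+b))) * (q - X^a * (q * Y^a)) = q - X^a * (q * Y^a) := by
    intro a b
    rw [sub_mul, mul_sub, mul_sub, hqq, pi1 a, pi2 (a+b), pi14 a b]
    abel
  have phi2 : ∀ a b : ℕ,
      (q - X^a * (q * Y^a)) * (q - X^(a+b) * (q * Y^(a+b))) = q - X^a * (q * Y^a) := by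
    intro a b
    rw [sub_mul, mul_sub, mul_sub, hqq, pi1 (a+b), pi2 a, pi15 a b]
    abel
  have phi3 : ∀ a b : ℕ,
      (q - X^(a+b) * (q * Y^(a+b))) * (X^a * (q - X^b * (q * Y^b)))
        = X^a * (q - X^b * (q * Y^b)) := by
    intro a b
    rw [mul_sub (X^a) q (X^b * (q * Y^b)), sub_mul, mul_sub, mul_sub,
      B2 a q hqq, B2 a _ (pi1 b), pi6 a b, pi7 a b]
    abel
  have phi4 : ∀ a b : ℕ,
      ((q - X^b * (q * Y^b)) * Y^a) * (q - X^(a+b) * (q * Y^(a+b)))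
        = (q - X^b * (q * Y^b)) * Y^a := by
    intro a b
    rw [sub_mul q (X^b * (q * Y^b)) (Y^a), sub_mul, mul_sub, mul_sub,
      B1 a q hqq, pi12 a b, pi10 a b, pi13 a b]
    abel
  have phi5 : ∀ a b : ℕ,
      (q - X^a * (q * Y^a)) * (X^a * (q - X^b * (q * Y^b))) = 0 := by
    intro a b
    rw [mul_sub (X^a) q (X^b * (q * Y^b)), sub_mul, mul_sub, mul_sub,
      B2 a q hqq, B2 a _ (pi1 b), pi4 a, pi5 a b]
    abel
  have phi6 : ∀ a b : ℕ,
      ((q - X^b * (q * Y^b)) * Y^a) * (q - X^a * (q * Y^a)) = 0 := by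
    intro a b
    rw [sub_mul q (X^b * (q * Y^b)) (Y^a), sub_mul, mul_sub, mul_sub,
      B1 a q hqq, pi9 a, pi10 a b, pi11 a b]
    abel
  have phi7 : ∀ k : ℕ, p * (q - X^k * (q * Y^k)) = q - X^k * (q * Y^k) := by
    intro k
    rw [mul_sub, hpq, A1 k _ (by rw [← mul_assoc, hpq])]
  have phi8 : ∀ k : ℕ, (q - X^k * (q * Y^k)) * p = q - X^k * (q * Y^k) := by
    intro k
    rw [sub_mul, hqp, mul_assoc (X^k), hqYp k]
  -- the closure induction
  intro z hz
  induction hz using AddSubgroup.closure_induction with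
  | mem w hw =>
    obtain ⟨c, d, rfl⟩ := hw
    have hppq : p * (p - q) = p - q := by rw [mul_sub, hpp, hpq]
    have hqpq : q * (p - q) = 0 := by rw [mul_sub, hqp, hqq, sub_self]
    have hpqq : (p - q) * q = 0 := by rw [sub_mul, hpq, hqq, sub_self]
    have he : (p - q) * (p - q) = p - q := by rw [sub_mul, hppq, hqpq, sub_zero]
    refine ⟨c * ((p - q) * Y), X * ((p - q) * d), 1, ?_, ?_, ?_, ?_⟩
    · rw [mul_assoc c, mul_assoc (p-q) Y, ← mul_assoc Y X, hYX, ← mul_assoc p (p-q) d,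
        hppq, ← mul_assoc (p-q) (p-q) d, he]
    · rw [pow_one, pow_one, sub_mul, ← mul_assoc q X, hqX, mul_assoc X (q*Y),
        mul_assoc q Y, ← mul_assoc Y X, hYX, ← mul_assoc p (p-q) d, hppq,
        ← mul_assoc q (p-q) d, hqpq, zero_mul, mul_zero, sub_zero]
    · rw [pow_one, pow_one, mul_sub, mul_assoc c ((p-q)*Y) q, mul_assoc (p-q) Y q, hYq,
        mul_assoc c ((p-q)*Y) (X*(q*Y)), mul_assoc (p-q) Y (X*(q*Y)),
        ← mul_assoc Y X (q*Y), hYX, ← mul_assoc p q Y, hpq, ← mul_assoc (p-q) q Y,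
        hpqq, zero_mul, mul_zero, sub_zero, ← mul_assoc c (p-q) Y]
    · rw [← mul_assoc p X, hpX]
  | zero => exact ⟨0, 0, 0, by simp, by simp, by simp, by simp⟩
  | add x y hx' hy' ihx ihy =>
    obtain ⟨a₁, b₁, m₁, hab₁, hFb₁, haF₁, hpb₁⟩ := ihx
    obtain ⟨a₂, b₂, m₂, hab₂, hFb₂, haF₂, hpb₂⟩ := ihy
    have cross1 : a₁ * (X^m₁ * b₂) = 0 := by
      conv_lhs => rw [← haF₁, ← hFb₂]
      rw [mul_assoc a₁, ← mul_assoc (X^m₁) (q - X^m₂*(q*Y^m₂)) b₂,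
        ← mul_assoc (q - X^m₁*(q*Y^m₁)) (X^m₁*(q - X^m₂*(q*Y^m₂))) b₂,
        phi5 m₁ m₂, zero_mul, mul_zero]
    have cross2 : (a₂ * Y^m₁) * b₁ = 0 := by
      conv_lhs => rw [← haF₂, ← hFb₁]
      rw [mul_assoc a₂ (q - X^m₂*(q*Y^m₂)) (Y^m₁),
        mul_assoc a₂ ((q - X^m₂*(q*Y^m₂))*Y^m₁) _,
        ← mul_assoc ((q - X^m₂*(q*Y^m₂))*Y^m₁) (q - X^m₁*(q*Y^m₁)) b₁,
        phi6 m₁ m₂, zero_mul, mul_zero]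
    have diag : (a₂ * Y^m₁) * (X^m₁ * b₂) = y := by
      conv_lhs => rw [← haF₂]
      rw [mul_assoc a₂ (q - X^m₂*(q*Y^m₂)) (Y^m₁),
        mul_assoc a₂ ((q - X^m₂*(q*Y^m₂))*Y^m₁) _,
        A3 m₁ _ b₂ (phi8 m₂), hFb₂, hab₂]
    have t1 : (q - X^(m₁+m₂)*(q*Y^(m₁+m₂))) * b₁ = b₁ := by
      conv_lhs => rw [← hFb₁]
      rw [← mul_assoc, phi1 m₁ m₂, hFb₁]
    have t2 : (q - X^(m₁+m₂)*(q*Y^(m₁+m₂))) * (X^m₁ * b₂) = X^m₁ * b₂ := by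
      conv_lhs => rw [← hFb₂]
      rw [← mul_assoc (X^m₁) (q - X^m₂*(q*Y^m₂)) b₂,
        ← mul_assoc (q - X^(m₁+m₂)*(q*Y^(m₁+m₂))) (X^m₁*(q - X^m₂*(q*Y^m₂))) b₂,
        phi3 m₁ m₂, mul_assoc (X^m₁), hFb₂]
    have s1 : a₁ * (q - X^(m₁+m₂)*(q*Y^(m₁+m₂))) = a₁ := by
      conv_lhs => rw [← haF₁]
      rw [mul_assoc, phi2 m₁ m₂, haF₁]
    have s2 : (a₂ * Y^m₁) * (q - X^(m₁+m₂)*(q*Y^(m₁+m₂))) = a₂ * Y^m₁ := by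
      conv_lhs => rw [← haF₂]
      rw [mul_assoc a₂ (q - X^m₂*(q*Y^m₂)) (Y^m₁),
        mul_assoc a₂ ((q - X^m₂*(q*Y^m₂))*Y^m₁) _,
        phi4 m₁ m₂, ← mul_assoc a₂ (q - X^m₂*(q*Y^m₂)) (Y^m₁), haF₂]
    refine ⟨a₁ + a₂ * Y^m₁, b₁ + X^m₁ * b₂, m₁ + m₂, ?_, ?_, ?_, ?_⟩
    · rw [add_mul, mul_add, mul_add, hab₁, cross1, cross2, diag]
      abel
    · rw [mul_add, t1, t2]
    · rw [add_mul, s1, s2]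
    · rw [mul_add, hpb₁, A1 m₁ b₂ hpb₂]
  | neg x hx' ihx =>
    obtain ⟨a, b, m, hab, hFb, haF, hpb⟩ := ihx
    exact ⟨a, -b, m, by rw [mul_neg, hab], by rw [mul_neg, hFb], haF, by rw [mul_neg, hpb]⟩
section
variable (R : Type*) [Ring R]

/-- `p` is an infinite idempotent: there is an idempotent `q < p` with `q ∼ p`. -/
def IsInfiniteIdem (p : R) : Prop :=
  p * p = p ∧ p ≠ 0 ∧
    ∃ q x y : R, q * q = q ∧ q * p = q ∧ p * q = q ∧ q ≠ p ∧
      x = q * x * p ∧ y = p * y * q ∧ x * y = q ∧ y * x = p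

/-- A subset is a right ideal of `R`. -/
def IsRightIdealSet (J : Set R) : Prop :=
  (0 : R) ∈ J ∧ (∀ a b, a ∈ J → b ∈ J → a + b ∈ J) ∧ ∀ a r, a ∈ J → a * r ∈ J

/-- A unital ring is purely infinite simple: it is simple and every non-zero right ideal
contains an infinite idempotent. -/
def IsPurelyInfiniteSimple : Prop :=
  (∀ I : TwoSidedIdeal R, I = ⊥ ∨ I = ⊤) ∧
    ∀ J : Set R, IsRightIdealSet R J → (∃ z ∈ J, z ≠ 0) →
      ∃ p ∈ J, IsInfiniteIdem R p

/-- A unital ring is purely infinite simple iff it is not a division ring and every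
non-zero element `x` satisfies `sxt = 1` for some `s, t`. -/
theorem pis_characterization [Nontrivial R] :
    IsPurelyInfiniteSimple R ↔
      (¬ ∀ x : R, x ≠ 0 → IsUnit x) ∧
        ∀ x : R, x ≠ 0 → ∃ s t : R, s * x * t = 1 := by
  constructor
  · rintro ⟨hsimple, hinf⟩
    constructor
    · intro hall
      obtain ⟨pp, -, hpp, hp0, q, X, Y, hqq, hqp, hpq, hqe, hX, hY, hXY, hYX⟩ :=
        hinf Set.univ ⟨trivial, fun _ _ _ _ => trivial, fun _ _ _ => trivial⟩
          ⟨1, trivial, one_ne_zero⟩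
      have hp1 : pp = 1 := (hall pp hp0).mul_left_cancel (by rw [hpp, mul_one])
      have hq0 : q = 0 := by
        by_contra h
        exact hqe (((hall q h).mul_left_cancel (by rw [hqq, mul_one])).trans hp1.symm)
      have hY0 : Y ≠ 0 := by
        rintro rfl
        rw [zero_mul] at hYX
        exact one_ne_zero (hp1 ▸ hYX.symm)
      obtain ⟨u, hu⟩ := hall Y hY0
      have hX0 : X = 0 := by
        have h1 : X * Y * ↑u⁻¹ = X := by rw [mul_assoc, ← hu, Units.mul_inv, mul_one]
        rw [← h1, hXY, hq0, zero_mul]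
      rw [hX0, mul_zero] at hYX
      exact one_ne_zero (hp1 ▸ hYX.symm)
    · intro x hx
      obtain ⟨pp, hppJ, hpp, hp0, q, X, Y, hqq, hqp, hpq, hqe, hX, hY, hXY, hYX⟩ :=
        hinf {w | ∃ r : R, w = x * r}
          ⟨⟨0, (mul_zero x).symm⟩,
           fun a b ha hb => by
             obtain ⟨r, rfl⟩ := ha; obtain ⟨s, rfl⟩ := hb
             exact ⟨r + s, by rw [mul_add]⟩,
           fun a r ha => by
             obtain ⟨s, rfl⟩ := ha
             exact ⟨s * r, by rw [mul_assoc]⟩⟩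
          ⟨x, ⟨1, (mul_one x).symm⟩, hx⟩
      obtain ⟨c, hc⟩ := hppJ
      set S : Set R := {w : R | ∃ c d : R, w = c * ((pp - q) * d)} with hS
      have hmul_left : ∀ (r w : R),
          w ∈ AddSubgroup.closure S → r * w ∈ AddSubgroup.closure S := by
        intro r w hw
        induction hw using AddSubgroup.closure_induction with
        | mem w hw =>
          obtain ⟨c', d', rfl⟩ := hw
          exact AddSubgroup.subset_closure ⟨r * c', d', by rw [mul_assoc]⟩
        | zero => rw [mul_zero]; exact zero_mem _
        | add a b _ _ iha ihb => rw [mul_add]; exact add_mem iha ihb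
        | neg a _ iha => rw [mul_neg]; exact neg_mem iha
      have hmul_right : ∀ (w r : R),
          w ∈ AddSubgroup.closure S → w * r ∈ AddSubgroup.closure S := by
        intro w r hw
        induction hw using AddSubgroup.closure_induction with
        | mem w hw =>
          obtain ⟨c', d', rfl⟩ := hw
          exact AddSubgroup.subset_closure
            ⟨c', d' * r, by rw [mul_assoc c', mul_assoc (pp - q)]⟩
        | zero => rw [zero_mul]; exact zero_mem _
        | add a b _ _ iha ihb => rw [add_mul]; exact add_mem iha ihb
        | neg a _ iha => rw [neg_mul]; exact neg_mem iha
      have hzm : (0 : R) ∈ (AddSubgroup.closure S : Set R) := zero_mem _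
      have ham : ∀ {a b : R}, a ∈ (AddSubgroup.closure S : Set R) →
          b ∈ (AddSubgroup.closure S : Set R) →
          a + b ∈ (AddSubgroup.closure S : Set R) := fun ha hb => add_mem ha hb
      have hnm : ∀ {a : R}, a ∈ (AddSubgroup.closure S : Set R) →
          -a ∈ (AddSubgroup.closure S : Set R) := fun ha => neg_mem ha
      have hml : ∀ {r w : R}, w ∈ (AddSubgroup.closure S : Set R) →
          r * w ∈ (AddSubgroup.closure S : Set R) := fun {r w} hw => hmul_left r w hw
      have hmr : ∀ {w r : R}, w ∈ (AddSubgroup.closure S : Set R) →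
          w * r ∈ (AddSubgroup.closure S : Set R) := fun {w r} hw => hmul_right w r hw
      have h1I : (1 : R) ∈ AddSubgroup.closure S := by
        obtain hbot | htop := hsimple
          (TwoSidedIdeal.mk' (AddSubgroup.closure S : Set R) hzm ham hnm hml hmr)
        · exfalso
          have hmem : (pp - q) ∈ AddSubgroup.closure S :=
            AddSubgroup.subset_closure ⟨1, 1, by rw [one_mul, mul_one]⟩
          have := (TwoSidedIdeal.mem_mk' (AddSubgroup.closure S : Set R)
            hzm ham hnm hml hmr (pp - q)).mpr hmem
          rw [hbot, TwoSidedIdeal.mem_bot] at this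
          exact sub_ne_zero_of_ne (Ne.symm hqe) this
        · have : (1 : R) ∈ TwoSidedIdeal.mk' (AddSubgroup.closure S : Set R)
              hzm ham hnm hml hmr := by
            rw [htop]; exact TwoSidedIdeal.mem_top R
          rwa [TwoSidedIdeal.mem_mk'] at this
      obtain ⟨a, b, m, hab, hFb, -, hpb⟩ :=
        pis_key pp q X Y hpp hqq hqp hpq hX hY hXY hYX 1 h1I
      refine ⟨a, c * b, ?_⟩
      rw [mul_assoc a x (c * b), ← mul_assoc x c b, ← hc, hpb, hab]
  · rintro ⟨hnd, hst⟩
    constructor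
    · intro I
      by_cases hI : ∃ z, z ∈ I ∧ z ≠ 0
      · right
        obtain ⟨z, hzI, hz⟩ := hI
        obtain ⟨s, t, hst1⟩ := hst z hz
        refine TwoSidedIdeal.eq_top I ?_
        rw [← hst1]
        exact I.mul_mem_right _ _ (I.mul_mem_left _ _ hzI)
      · left
        push_neg at hI
        refine eq_bot_iff.mpr fun w hw => ?_
        rw [TwoSidedIdeal.mem_bot]
        exact hI w hw
    · rintro J hJ ⟨z, hzJ, hz0⟩
      obtain ⟨s, t, hst1⟩ := hst z hz0
      push_neg at hnd
      obtain ⟨x₀, hx00, hxu⟩ := hnd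
      obtain ⟨s₀, t₀, h0⟩ := hst x₀ hx00
      have huv : ∃ u v : R, v * u = 1 ∧ u * v ≠ 1 := by
        by_cases h1 : x₀ * t₀ * s₀ = 1
        · by_cases h2 : t₀ * (s₀ * x₀) = 1
          · exact absurd (⟨⟨x₀, t₀ * s₀, by rw [← mul_assoc]; exact h1,
              by rw [mul_assoc]; exact h2⟩, rfl⟩ : IsUnit x₀) hxu
          · exact ⟨t₀, s₀ * x₀, h0, h2⟩
        · exact ⟨x₀ * t₀, s₀, by rw [← mul_assoc]; exact h0, h1⟩
      obtain ⟨u, v, hvu, huv1⟩ := huv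
      have hzts : z * t * s ∈ J := by
        have := hJ.2.2 z (t * s) hzJ
        rwa [← mul_assoc] at this
      have hBA : s * (z * t) = 1 := by rw [← mul_assoc]; exact hst1
      have hBAw : ∀ w : R, s * (z * (t * w)) = w := by
        intro w
        rw [← mul_assoc s z (t * w), ← mul_assoc (s * z) t w, hst1, one_mul]
      have hvuw : ∀ w : R, v * (u * w) = w := by
        intro w; rw [← mul_assoc, hvu, one_mul]
      have h2 : s * ((z * t * s) * (z * t)) = 1 := by
        rw [mul_assoc (z * t) s (z * t), hBA, mul_one, hBA]
      refine ⟨z * t * s, hzts, ?_, ?_,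
        z * (t * (u * (v * s))), z * (t * (u * s)), z * (t * (v * s)),
        ?_, ?_, ?_, ?_, ?_, ?_, ?_, ?_⟩
      · simp only [mul_assoc, hBAw, hvuw, hBA, hvu, mul_one, one_mul]
      · intro h
        rw [h, zero_mul, mul_zero] at h2
        exact one_ne_zero h2.symm
      · simp only [mul_assoc, hBAw, hvuw, hBA, hvu, mul_one, one_mul]
      · simp only [mul_assoc, hBAw, hvuw, hBA, hvu, mul_one, one_mul]
      · simp only [mul_assoc, hBAw, hvuw, hBA, hvu, mul_one, one_mul]
      · intro hq
        apply huv1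
        have h3 := congrArg (fun w => s * (w * (z * t))) hq
        simpa only [mul_assoc, hBAw, hvuw, hBA, hvu, mul_one, one_mul] using h3
      · simp only [mul_assoc, hBAw, hvuw, hBA, hvu, mul_one, one_mul]
      · simp only [mul_assoc, hBAw, hvuw, hBA, hvu, mul_one, one_mul]
      · simp only [mul_assoc, hBAw, hvuw, hBA, hvu, mul_one, one_mul]
      · simp only [mul_assoc, hBAw, hvuw, hBA, hvu, mul_one, one_mul]

end
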